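/- Let $1\le p<u<\infty$. Then $\mathcal{X}_{u,p}(\mathbb{Z}^d)$ is a pre-dual of $m_{u,p}(\mathbb{Z}^d)$: the topological dual of $\mathcal{X}_{u,p}(\mathbb{Z}^d)$ is isometrically isomorphic to $m_{u,p}(\mathbb{Z}^d)$. Concretely, (a) for every $\mu\in m_{u,p}$ and $\lambda\in\mathcal{X}_{u,p}$ the pairing satisfies $|\sum_{k\in\mathbb{Z}^d}\lambda_k\mu_k|\le \|\mu\,|\,m_{u,p}\|\,\|\lambda\,|\,\mathcal{X}_{u,p}\|$, so each $\mu\in m_{u,p}$ induces a bounded linear functional on $\mathcal{X}_{u,p}$ of norm at most $\|\mu\,|\,m_{u,p}\|$; and (b) conversely, for every bounded linear functional $f$ on $\mathcal{X}_{u,p}(\mathbb{Z}^d)$ the sequence $\{f(e^{(k)})\}_{k\in\mathbb{Z}^d}$ belongs to $m_{u,p}(\mathbb{Z}^d)$ with $\|\{f(e^{(k)})\}_k\,|\,m_{u,p}\|\le\|f\|$, where $e^{(k)}$ is the $k$-th standard unit sequence. -/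

import Mathlib

open scoped ENNReal NNReal BigOperators
open Filter

/-- The unit cube `Q_{0,k}` is contained in the dyadic cube `Q_{-j,m}` of side length `2^j`. -/
def inDyadic (d j : ℕ) (m k : Fin d → ℤ) : Prop :=
  ∀ i, 2 ^ j * m i ≤ k i ∧ k i < 2 ^ j * (m i + 1)

/-- The Morrey sequence space quasi-norm `‖λ | m_{u,p}(ℤ^d)‖`, with values in `ℝ≥0∞`. -/
noncomputable def morreyNorm (d : ℕ) (u p : ℝ) (lam : (Fin d → ℤ) → ℂ) : ℝ≥0∞ :=
  ⨆ (j : ℕ) (m : Fin d → ℤ),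
    ((2 : ℝ≥0∞) ^ (j * d)) ^ (1 / u - 1 / p) *
      (∑' k : {k : Fin d → ℤ // inDyadic d j m k}, (‖lam k.1‖₊ : ℝ≥0∞) ^ p) ^ (1 / p)

/-- The `ℓ_r(ℤ^d)` norm. -/
noncomputable def lpNorm (d : ℕ) (r : ℝ) (lam : (Fin d → ℤ) → ℂ) : ℝ≥0∞ :=
  (∑' k : Fin d → ℤ, (‖lam k‖₊ : ℝ≥0∞) ^ r) ^ (1 / r)

/-- The `ℓ_∞(ℤ^d)` norm. -/
noncomputable def lInftyNorm (d : ℕ) (lam : (Fin d → ℤ) → ℂ) : ℝ≥0∞ :=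
  ⨆ k : Fin d → ℤ, (‖lam k‖₊ : ℝ≥0∞)

/-- The weak Lorentz `ℓ_{u,∞}(ℤ^d)` norm, via the distribution function. -/
noncomputable def weakNorm (d : ℕ) (u : ℝ) (lam : (Fin d → ℤ) → ℂ) : ℝ≥0∞ :=
  ⨆ t : ℝ≥0, (t : ℝ≥0∞) *
    (∑' _ : {k : Fin d → ℤ // (t : ℝ) < ‖lam k‖}, (1 : ℝ≥0∞)) ^ (1 / u)

/-- The norm of the level-`j` space `X^{(j)}_{u,p}(ℤ^d)`. -/
noncomputable def XjNorm (d : ℕ) (u p p' : ℝ) (j : ℕ) (lam : (Fin d → ℤ) → ℂ) : ℝ≥0∞ :=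
  ((2 : ℝ≥0∞) ^ (j * d)) ^ (1 / p - 1 / u) *
    ∑' m : Fin d → ℤ,
      (∑' k : {k : Fin d → ℤ // inDyadic d j m k}, (‖lam k.1‖₊ : ℝ≥0∞) ^ p') ^ (1 / p')

/-- The norm of `X_{u,p}(ℤ^d)`: infimum over decompositions `λ = ∑_j λ^{(j)}`. -/
noncomputable def XupNorm (d : ℕ) (u p p' : ℝ) (lam : (Fin d → ℤ) → ℂ) : ℝ≥0∞ :=
  ⨅ (L : ℕ → (Fin d → ℤ) → ℂ) (_ : ∀ k, HasSum (fun j => L j k) (lam k)),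
    ∑' j : ℕ, XjNorm d u p p' j (L j)

/-- Membership in `m_{u,p}(ℤ^d)`. -/
def MemMorrey (d : ℕ) (u p : ℝ) (lam : (Fin d → ℤ) → ℂ) : Prop :=
  morreyNorm d u p lam ≠ ⊤

/-- Membership in `m^{00}_{u,p}(ℤ^d)`, the closure of the finitely supported sequences. -/
def MemMorrey00 (d : ℕ) (u p : ℝ) (lam : (Fin d → ℤ) → ℂ) : Prop :=
  MemMorrey d u p lam ∧
    ∀ ε : ℝ≥0∞, 0 < ε → ∃ mu : (Fin d → ℤ) → ℂ,
      (Function.support mu).Finite ∧ morreyNorm d u p (lam - mu) < ε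

/-- `Q_{-ν,m} ⊆ Q_{-j,0}` for dyadic cubes. -/
def subCube (d j ν : ℕ) (m : Fin d → ℤ) : Prop :=
  ν ≤ j ∧ ∀ i, 0 ≤ m i ∧ 2 ^ ν * (m i + 1) ≤ 2 ^ j

/-- Norm of the finite-dimensional Morrey space `m^{2^{jd}}_{u,p}` on the cube `Q_{-j,0}`. -/
noncomputable def finMorreyNorm (d : ℕ) (u p : ℝ) (j : ℕ) (lam : (Fin d → ℤ) → ℂ) : ℝ≥0∞ :=
  ⨆ (ν : ℕ) (m : Fin d → ℤ) (_ : subCube d j ν m),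
    ((2 : ℝ≥0∞) ^ (ν * d)) ^ (1 / u - 1 / p) *
      (∑' k : {k : Fin d → ℤ // inDyadic d ν m k}, (‖lam k.1‖₊ : ℝ≥0∞) ^ p) ^ (1 / p)

/-- Operator norm of `id_j : m^{2^{jd}}_{u₁,p₁} → m^{2^{jd}}_{u₂,p₂}`. -/
noncomputable def morreyOpNorm (d : ℕ) (u₁ p₁ u₂ p₂ : ℝ) (j : ℕ) : ℝ≥0∞ :=
  ⨆ (lam : (Fin d → ℤ) → ℂ) (_ : finMorreyNorm d u₁ p₁ j lam ≤ 1),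
    finMorreyNorm d u₂ p₂ j lam

section Helpers


lemma myHolder {ι : Type*} (a b : ι → ℝ≥0∞) {p q : ℝ} (hpq : p.HolderConjugate q) :
    ∑' i, a i * b i ≤ (∑' i, a i ^ p) ^ (1/p) * (∑' i, b i ^ q) ^ (1/q) := by
  letI : MeasurableSpace ι := ⊤
  haveI : MeasurableSingletonClass ι := ⟨fun _ => trivial⟩
  have ha : Measurable a := fun s _ => trivial
  have hb : Measurable b := fun s _ => trivial
  have := ENNReal.lintegral_mul_le_Lp_mul_Lq (MeasureTheory.Measure.count (α := ι)) hpq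
    ha.aemeasurable hb.aemeasurable
  simpa [MeasureTheory.lintegral_count] using this

lemma inDyadic_self (d j : ℕ) (k : Fin d → ℤ) :
    inDyadic d j (fun i => k i / 2 ^ j) k := by
  intro i
  have hc : (0:ℤ) < 2 ^ j := by positivity
  have h1 := Int.mul_ediv_add_emod (k i) (2 ^ j)
  have h2 := Int.emod_nonneg (k i) (ne_of_gt hc)
  have h3 := Int.emod_lt_of_pos (k i) hc
  constructor
  · nlinarith [h1, h2]
  · nlinarith [h1, h3]

lemma inDyadic_unique {d j : ℕ} {m k : Fin d → ℤ} (h : inDyadic d j m k) :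
    m = fun i => k i / 2 ^ j := by
  funext i
  have hc : (0:ℤ) < 2 ^ j := by positivity
  obtain ⟨h1, h2⟩ := h i
  have hle : m i ≤ k i / 2 ^ j := by
    rw [Int.le_ediv_iff_mul_le hc]; linarith [h1]
  have hlt : k i / 2 ^ j < m i + 1 := by
    rw [Int.ediv_lt_iff_lt_mul hc]; linarith [h2]
  omega

lemma inDyadic_disjoint {d j : ℕ} {m m' k : Fin d → ℤ} (h : inDyadic d j m k)
    (h' : inDyadic d j m' k) : m = m' := by
  rw [inDyadic_unique h, inDyadic_unique h']

def cubeEquiv (d j : ℕ) : (Fin d → ℤ) ≃ Σ m : Fin d → ℤ, {k : Fin d → ℤ // inDyadic d j m k} where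
  toFun k := ⟨fun i => k i / 2 ^ j, ⟨k, inDyadic_self d j k⟩⟩
  invFun x := x.2.1
  left_inv k := rfl
  right_inv := by
    rintro ⟨m, k, hk⟩
    have : m = fun i => k i / 2 ^ j := inDyadic_unique hk
    subst this
    rfl

/-- Partition of a tsum over `ℤ^d` into dyadic cubes. -/
lemma tsum_dyadic (d j : ℕ) (F : (Fin d → ℤ) → ℝ≥0∞) :
    ∑' k, F k = ∑' m : Fin d → ℤ, ∑' k : {k : Fin d → ℤ // inDyadic d j m k}, F k.1 := by
  rw [← Equiv.tsum_eq (cubeEquiv d j).symm F, ENNReal.tsum_sigma']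
  rfl

lemma cube_finite (d j : ℕ) (m : Fin d → ℤ) : {k : Fin d → ℤ | inDyadic d j m k}.Finite := by
  apply Set.Finite.subset (Set.Finite.pi (fun i => Set.finite_Icc (2^j * m i) (2^j * (m i + 1))))
  intro k hk
  simp only [Set.mem_pi, Set.mem_univ, Set.mem_Icc, forall_true_left]
  intro i
  exact ⟨(hk i).1, le_of_lt (hk i).2⟩

lemma inDyadic_zero {d : ℕ} {m k : Fin d → ℤ} : inDyadic d 0 m k ↔ k = m := by
  constructor
  · intro h; funext i; have := h i; simp at this; omega
  · rintro rfl i; simp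

end Helpers

section X


variable {d : ℕ} {u p p' : ℝ}

lemma base_ne_zero (j : ℕ) : ((2 : ℝ≥0∞) ^ (j * d)) ≠ 0 := by positivity

lemma base_ne_top (j : ℕ) : ((2 : ℝ≥0∞) ^ (j * d)) ≠ ⊤ := by
  exact ENNReal.pow_ne_top ENNReal.ofNat_ne_top

lemma bfac_ne_top (j : ℕ) (x : ℝ) : ((2 : ℝ≥0∞) ^ (j * d)) ^ x ≠ ⊤ := by
  intro h
  rw [ENNReal.rpow_eq_top_iff] at h
  rcases h with ⟨h1, _⟩ | ⟨h1, _⟩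
  exacts [base_ne_zero (d := d) j h1, base_ne_top j h1]

lemma bfac_mul_bfac (j : ℕ) (x : ℝ) :
    ((2 : ℝ≥0∞) ^ (j * d)) ^ x * ((2 : ℝ≥0∞) ^ (j * d)) ^ (-x) = 1 := by
  rw [← ENNReal.rpow_add _ _ (base_ne_zero j) (base_ne_top j)]
  simp

lemma XjNorm_zero (hp'0 : 0 < p') (j : ℕ) : XjNorm d u p p' j 0 = 0 := by
  have : ∀ m : Fin d → ℤ,
      (∑' k : {k : Fin d → ℤ // inDyadic d j m k}, (‖(0:(Fin d → ℤ) → ℂ) k.1‖₊ : ℝ≥0∞) ^ p') = 0 := by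
    intro m
    simp [ENNReal.zero_rpow_of_pos hp'0]
  simp only [XjNorm, this, ENNReal.zero_rpow_of_pos (by positivity : (0:ℝ) < 1/p'),
    tsum_zero, mul_zero]

lemma XupNorm_le_XjNorm (hp'0 : 0 < p') (j : ℕ) (lam : (Fin d → ℤ) → ℂ) :
    XupNorm d u p p' lam ≤ XjNorm d u p p' j lam := by
  have hdec : ∀ k, HasSum (fun i => (if i = j then lam else 0) k) (lam k) := by
    intro k
    have := hasSum_ite_eq j (lam k)
    convert this using 2 with i
    by_cases h : i = j <;> simp [h]
  refine le_trans (iInf_le _ (fun i => if i = j then lam else 0)) (le_trans (iInf_le _ hdec) ?_)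
  rw [tsum_eq_single j]
  · simp
  · intro b hb
    simp only [if_neg hb]
    exact XjNorm_zero hp'0 b

lemma XjNorm_level_zero (hp'0 : 0 < p') (lam : (Fin d → ℤ) → ℂ) :
    XjNorm d u p p' 0 lam = ∑' m : Fin d → ℤ, (‖lam m‖₊ : ℝ≥0∞) := by
  have huniq : ∀ m : Fin d → ℤ,
      (∑' k : {k : Fin d → ℤ // inDyadic d 0 m k}, (‖lam k.1‖₊ : ℝ≥0∞) ^ p')
        = (‖lam m‖₊ : ℝ≥0∞) ^ p' := by
    intro m
    have hm : inDyadic d 0 m m := by intro i; simp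
    rw [tsum_eq_single (⟨m, hm⟩ : {k : Fin d → ℤ // inDyadic d 0 m k})]
    intro b hb
    exfalso
    apply hb
    apply Subtype.ext
    funext i
    show (b : Fin d → ℤ) i = m i
    have := b.2 i
    simp at this
    omega
  simp only [XjNorm, huniq]
  rw [Nat.zero_mul, pow_zero, ENNReal.one_rpow, one_mul]
  congr 1
  funext m
  rw [← ENNReal.rpow_mul, mul_one_div_cancel (ne_of_gt hp'0), ENNReal.rpow_one]

lemma XupNorm_finsupp_ne_top (hp'0 : 0 < p') {lam : (Fin d → ℤ) → ℂ}
    (h : (Function.support lam).Finite) : XupNorm d u p p' lam ≠ ⊤ := by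
  refine ne_top_of_le_ne_top ?_ (XupNorm_le_XjNorm hp'0 0 lam)
  rw [XjNorm_level_zero hp'0]
  rw [tsum_eq_sum (s := h.toFinset) (by intro b hb; simp at hb; simp [hb])]
  exact (ENNReal.sum_lt_top.2 (fun a _ => ENNReal.coe_lt_top)).ne

lemma XupNorm_zero (hp'0 : 0 < p') : XupNorm d u p (p') (0 : (Fin d → ℤ) → ℂ) = 0 := by
  refine le_antisymm ?_ (zero_le)
  refine le_trans (XupNorm_le_XjNorm hp'0 0 0) ?_
  rw [XjNorm_level_zero hp'0]
  simp

end X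

section PartA

variable {d : ℕ} {u p p' : ℝ}

lemma morrey_extract (hp0 : 0 < p) (mu : (Fin d → ℤ) → ℂ) (j : ℕ) (m : Fin d → ℤ) :
    (∑' k : {k : Fin d → ℤ // inDyadic d j m k}, (‖mu k.1‖₊ : ℝ≥0∞) ^ p) ^ (1/p)
      ≤ ((2 : ℝ≥0∞) ^ (j * d)) ^ (1/p - 1/u) * morreyNorm d u p mu := by
  have hterm : ((2 : ℝ≥0∞) ^ (j * d)) ^ (1/u - 1/p) *
      (∑' k : {k : Fin d → ℤ // inDyadic d j m k}, (‖mu k.1‖₊ : ℝ≥0∞) ^ p) ^ (1/p)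
        ≤ morreyNorm d u p mu :=
    le_iSup_of_le j (le_iSup_of_le m le_rfl)
  have hneg : (1/u - 1/p : ℝ) = -(1/p - 1/u) := by ring
  calc (∑' k : {k : Fin d → ℤ // inDyadic d j m k}, (‖mu k.1‖₊ : ℝ≥0∞) ^ p) ^ (1/p)
      = (((2 : ℝ≥0∞) ^ (j * d)) ^ (1/p - 1/u) * ((2 : ℝ≥0∞) ^ (j * d)) ^ (-(1/p - 1/u))) *
          (∑' k : {k : Fin d → ℤ // inDyadic d j m k}, (‖mu k.1‖₊ : ℝ≥0∞) ^ p) ^ (1/p) := by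
        rw [bfac_mul_bfac, one_mul]
    _ = ((2 : ℝ≥0∞) ^ (j * d)) ^ (1/p - 1/u) *
          (((2 : ℝ≥0∞) ^ (j * d)) ^ (1/u - 1/p) *
            (∑' k : {k : Fin d → ℤ // inDyadic d j m k}, (‖mu k.1‖₊ : ℝ≥0∞) ^ p) ^ (1/p)) := by
        rw [hneg, mul_assoc]
    _ ≤ ((2 : ℝ≥0∞) ^ (j * d)) ^ (1/p - 1/u) * morreyNorm d u p mu :=
        mul_le_mul_right hterm _

lemma level_est (hpq : p.HolderConjugate p') (mu g : (Fin d → ℤ) → ℂ) (j : ℕ) :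
    ∑' k, (‖g k‖₊ : ℝ≥0∞) * (‖mu k‖₊ : ℝ≥0∞)
      ≤ XjNorm d u p p' j g * morreyNorm d u p mu := by
  rw [tsum_dyadic d j (fun k => (‖g k‖₊ : ℝ≥0∞) * (‖mu k‖₊ : ℝ≥0∞))]
  calc ∑' m : Fin d → ℤ, ∑' k : {k : Fin d → ℤ // inDyadic d j m k},
        (‖g k.1‖₊ : ℝ≥0∞) * (‖mu k.1‖₊ : ℝ≥0∞)
      ≤ ∑' m : Fin d → ℤ,
          (∑' k : {k : Fin d → ℤ // inDyadic d j m k}, (‖g k.1‖₊ : ℝ≥0∞) ^ p') ^ (1/p') *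
          (∑' k : {k : Fin d → ℤ // inDyadic d j m k}, (‖mu k.1‖₊ : ℝ≥0∞) ^ p) ^ (1/p) :=
      ENNReal.tsum_le_tsum (fun m => myHolder _ _ hpq.symm)
    _ ≤ ∑' m : Fin d → ℤ,
          (∑' k : {k : Fin d → ℤ // inDyadic d j m k}, (‖g k.1‖₊ : ℝ≥0∞) ^ p') ^ (1/p') *
          (((2 : ℝ≥0∞) ^ (j * d)) ^ (1/p - 1/u) * morreyNorm d u p mu) :=
      ENNReal.tsum_le_tsum (fun m => mul_le_mul_right (morrey_extract hpq.pos mu j m) _)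
    _ = (∑' m : Fin d → ℤ,
          (∑' k : {k : Fin d → ℤ // inDyadic d j m k}, (‖g k.1‖₊ : ℝ≥0∞) ^ p') ^ (1/p')) *
          (((2 : ℝ≥0∞) ^ (j * d)) ^ (1/p - 1/u) * morreyNorm d u p mu) :=
      ENNReal.tsum_mul_right
    _ = XjNorm d u p p' j g * morreyNorm d u p mu := by
      rw [XjNorm]; ring

lemma nnnorm_le_tsum_of_hasSum {g : ℕ → ℂ} {s : ℂ} (h : HasSum g s) :
    (‖s‖₊ : ℝ≥0∞) ≤ ∑' j, (‖g j‖₊ : ℝ≥0∞) := by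
  by_cases htop : ∑' j, (‖g j‖₊ : ℝ≥0∞) = ⊤
  · simp [htop]
  · have hsum : Summable (fun j => ‖g j‖₊) := ENNReal.tsum_coe_ne_top_iff_summable.mp htop
    rw [← h.tsum_eq]
    rw [← ENNReal.coe_tsum hsum]
    exact_mod_cast nnnorm_tsum_le hsum

lemma key_est (hpq : p.HolderConjugate p') (mu lam : (Fin d → ℤ) → ℂ)
    (L : ℕ → (Fin d → ℤ) → ℂ) (hL : ∀ k, HasSum (fun j => L j k) (lam k)) :
    ∑' k, (‖lam k‖₊ : ℝ≥0∞) * (‖mu k‖₊ : ℝ≥0∞)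
      ≤ morreyNorm d u p mu * ∑' j, XjNorm d u p p' j (L j) := by
  calc ∑' k, (‖lam k‖₊ : ℝ≥0∞) * (‖mu k‖₊ : ℝ≥0∞)
      ≤ ∑' k, (∑' j, (‖L j k‖₊ : ℝ≥0∞)) * (‖mu k‖₊ : ℝ≥0∞) :=
      ENNReal.tsum_le_tsum (fun k => mul_le_mul_left (nnnorm_le_tsum_of_hasSum (hL k)) _)
    _ = ∑' k, ∑' j, (‖L j k‖₊ : ℝ≥0∞) * (‖mu k‖₊ : ℝ≥0∞) := by
      congr 1; funext k; exact (ENNReal.tsum_mul_right).symm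
    _ = ∑' j, ∑' k, (‖L j k‖₊ : ℝ≥0∞) * (‖mu k‖₊ : ℝ≥0∞) := ENNReal.tsum_comm
    _ ≤ ∑' j, XjNorm d u p p' j (L j) * morreyNorm d u p mu :=
      ENNReal.tsum_le_tsum (fun j => level_est hpq mu (L j) j)
    _ = morreyNorm d u p mu * ∑' j, XjNorm d u p p' j (L j) := by
      rw [ENNReal.tsum_mul_right, mul_comm]

end PartA

section PartAMain

variable {d : ℕ} {u p p' : ℝ}

lemma Xup_exists_decomp {lam : (Fin d → ℤ) → ℂ} {b : ℝ≥0∞}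
    (hb : XupNorm d u p p' lam < b) :
    ∃ L : ℕ → (Fin d → ℤ) → ℂ, (∀ k, HasSum (fun j => L j k) (lam k)) ∧
      ∑' j, XjNorm d u p p' j (L j) < b := by
  rw [XupNorm, iInf_lt_iff] at hb
  obtain ⟨L, hLb⟩ := hb
  rw [iInf_lt_iff] at hLb
  obtain ⟨hL, hlt⟩ := hLb
  exact ⟨L, hL, hlt⟩

lemma partA (hpq : p.HolderConjugate p') (mu lam : (Fin d → ℤ) → ℂ)
    (hmu : morreyNorm d u p mu ≠ ⊤) (hlam : XupNorm d u p p' lam ≠ ⊤) :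
    Summable (fun k => lam k * mu k) ∧
      (‖∑' k, lam k * mu k‖₊ : ℝ≥0∞) ≤ morreyNorm d u p mu * XupNorm d u p p' lam := by
  have hcoe : ∀ k, (‖lam k * mu k‖₊ : ℝ≥0∞) = (‖lam k‖₊ : ℝ≥0∞) * (‖mu k‖₊ : ℝ≥0∞) := by
    intro k; rw [nnnorm_mul, ENNReal.coe_mul]
  -- the quantity to bound
  set t : ℝ≥0∞ := ∑' k, (‖lam k * mu k‖₊ : ℝ≥0∞) with ht_def
  have hkey : ∀ L : ℕ → (Fin d → ℤ) → ℂ, (∀ k, HasSum (fun j => L j k) (lam k)) →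
      t ≤ morreyNorm d u p mu * ∑' j, XjNorm d u p p' j (L j) := by
    intro L hL
    rw [ht_def]
    simp only [hcoe]
    exact key_est hpq mu lam L hL
  obtain ⟨L₀, hL₀, hS₀⟩ := Xup_exists_decomp (lam := lam) (u := u)
    (ENNReal.lt_add_right hlam one_ne_zero)
  have ht_fin : t ≠ ⊤ := by
    refine ne_top_of_le_ne_top (ENNReal.mul_ne_top hmu
      (ENNReal.add_ne_top.2 ⟨hlam, ENNReal.one_ne_top⟩)) ?_
    exact le_trans (hkey L₀ hL₀) (mul_le_mul_right hS₀.le _)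
  have hsummable : Summable (fun k => ‖lam k * mu k‖₊) :=
    ENNReal.tsum_coe_ne_top_iff_summable.mp ht_fin
  have hsum : Summable (fun k => lam k * mu k) := Summable.of_nnnorm hsummable
  refine ⟨hsum, ?_⟩
  have hnorm_le : (‖∑' k, lam k * mu k‖₊ : ℝ≥0∞) ≤ t := by
    rw [ht_def, ← ENNReal.coe_tsum hsummable]
    exact_mod_cast nnnorm_tsum_le hsummable
  refine le_trans hnorm_le ?_
  -- now show t ≤ morrey * Xup via epsilon argument
  refine ENNReal.le_of_forall_pos_le_add ?_
  intro ε hε _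
  have hM1 : (morreyNorm d u p mu + 1) ≠ 0 := by simp
  have hM1top : (morreyNorm d u p mu + 1) ≠ ⊤ := ENNReal.add_ne_top.2 ⟨hmu, ENNReal.one_ne_top⟩
  set δ : ℝ≥0∞ := (ε : ℝ≥0∞) / (morreyNorm d u p mu + 1) with hδ_def
  have hδ0 : δ ≠ 0 := by
    rw [hδ_def]
    simp [ENNReal.div_eq_zero_iff, hM1top, (ENNReal.coe_ne_zero).2 (ne_of_gt hε)]
  obtain ⟨L, hL, hS⟩ := Xup_exists_decomp (lam := lam) (u := u)
    (ENNReal.lt_add_right hlam hδ0)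
  calc t ≤ morreyNorm d u p mu * ∑' j, XjNorm d u p p' j (L j) := hkey L hL
    _ ≤ morreyNorm d u p mu * (XupNorm d u p p' lam + δ) := mul_le_mul_right hS.le _
    _ = morreyNorm d u p mu * XupNorm d u p p' lam + morreyNorm d u p mu * δ := by
        rw [mul_add]
    _ ≤ morreyNorm d u p mu * XupNorm d u p p' lam + (morreyNorm d u p mu + 1) * δ :=
        add_le_add_right (mul_le_mul_left (le_self_add) _) _
    _ = morreyNorm d u p mu * XupNorm d u p p' lam + ε := by
        rw [hδ_def, ENNReal.mul_div_cancel hM1 hM1top]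

end PartAMain

section PartB

variable {d : ℕ} {u p p' : ℝ}

lemma supp_fin (T : Finset (Fin d → ℤ)) (c : (Fin d → ℤ) → ℂ) :
    (Function.support (fun n => ∑ k ∈ T, c k * (if n = k then (1:ℂ) else 0))).Finite := by
  apply Set.Finite.subset T.finite_toSet
  intro n hn
  simp only [Function.mem_support] at hn
  by_contra hnT
  apply hn
  apply Finset.sum_eq_zero
  intro k hk
  have : n ≠ k := fun h => hnT (h ▸ hk)
  simp [this]

lemma f_zero (hp'0 : 0 < p')
    (f : ((Fin d → ℤ) → ℂ) → ℂ)
    (hsmul : ∀ (c : ℂ) (lam : (Fin d → ℤ) → ℂ), XupNorm d u p p' lam ≠ ⊤ →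
      f (c • lam) = c * f lam) : f 0 = 0 := by
  have h0 : XupNorm d u p p' (0 : (Fin d → ℤ) → ℂ) ≠ ⊤ := by
    rw [XupNorm_zero hp'0]; exact ENNReal.zero_ne_top
  have := hsmul 0 0 h0
  simpa using this

lemma f_finsum (hp'0 : 0 < p')
    (f : ((Fin d → ℤ) → ℂ) → ℂ)
    (hadd : ∀ lam mu : (Fin d → ℤ) → ℂ, XupNorm d u p p' lam ≠ ⊤ → XupNorm d u p p' mu ≠ ⊤ →
      f (lam + mu) = f lam + f mu)
    (hsmul : ∀ (c : ℂ) (lam : (Fin d → ℤ) → ℂ), XupNorm d u p p' lam ≠ ⊤ →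
      f (c • lam) = c * f lam)
    (T : Finset (Fin d → ℤ)) (c : (Fin d → ℤ) → ℂ) :
    f (fun n => ∑ k ∈ T, c k * (if n = k then 1 else 0))
      = ∑ k ∈ T, c k * f (fun n => if n = k then 1 else 0) := by
  classical
  induction T using Finset.induction_on with
  | empty =>
    simp only [Finset.sum_empty]
    exact f_zero hp'0 f hsmul
  | @insert a T ha ih =>
    have he : XupNorm d u p p' (fun n => if n = a then (1:ℂ) else 0) ≠ ⊤ := by
      apply XupNorm_finsupp_ne_top hp'0
      apply Set.Finite.subset (Set.finite_singleton a)
      intro n hn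
      simp only [Function.mem_support] at hn
      by_contra h
      simp only [Set.mem_singleton_iff] at h
      simp [h] at hn
    have hce : XupNorm d u p p' (c a • fun n => if n = a then (1:ℂ) else 0) ≠ ⊤ := by
      apply XupNorm_finsupp_ne_top hp'0
      apply Set.Finite.subset (Set.finite_singleton a)
      intro n hn
      simp only [Function.mem_support] at hn
      by_contra h
      simp only [Set.mem_singleton_iff] at h
      simp [h] at hn
    have hT : XupNorm d u p p' (fun n => ∑ k ∈ T, c k * (if n = k then (1:ℂ) else 0)) ≠ ⊤ :=
      XupNorm_finsupp_ne_top hp'0 (supp_fin T c)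
    have hfun : (fun n => ∑ k ∈ insert a T, c k * (if n = k then (1:ℂ) else 0))
        = (c a • fun n => if n = a then (1:ℂ) else 0)
          + (fun n => ∑ k ∈ T, c k * (if n = k then (1:ℂ) else 0)) := by
      funext n
      simp only [Finset.sum_insert ha, Pi.add_apply, Pi.smul_apply, smul_eq_mul]
    rw [hfun, hadd _ _ hce hT, hsmul _ _ he, ih, Finset.sum_insert ha]

end PartB

section PartB2

variable {d : ℕ} {u p p' : ℝ}

lemma tsum_cube {j : ℕ} {m : Fin d → ℤ} (g : (Fin d → ℤ) → ℝ≥0∞) :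
    ∑' k : {k : Fin d → ℤ // inDyadic d j m k}, g k.1
      = ∑ k ∈ (cube_finite d j m).toFinset, g k := by
  have h := tsum_subtype {k : Fin d → ℤ | inDyadic d j m k} g
  refine h.trans ?_
  rw [tsum_eq_sum (s := (cube_finite d j m).toFinset)
    (by intro b hb; apply Set.indicator_of_notMem; simpa using hb)]
  apply Finset.sum_congr rfl
  intro k hk
  apply Set.indicator_of_mem
  simpa using hk

lemma partB (hp1 : 1 < p) (hp'0 : 0 < p') (hconj : 1/p + 1/p' = 1) (hppr : (p-1)*p' = p)
    (f : ((Fin d → ℤ) → ℂ) → ℂ) (C : ℝ≥0∞)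
    (hadd : ∀ lam mu : (Fin d → ℤ) → ℂ, XupNorm d u p p' lam ≠ ⊤ → XupNorm d u p p' mu ≠ ⊤ →
      f (lam + mu) = f lam + f mu)
    (hsmul : ∀ (c : ℂ) (lam : (Fin d → ℤ) → ℂ), XupNorm d u p p' lam ≠ ⊤ →
      f (c • lam) = c * f lam)
    (hbound : ∀ lam : (Fin d → ℤ) → ℂ, XupNorm d u p p' lam ≠ ⊤ →
      (‖f lam‖₊ : ℝ≥0∞) ≤ C * XupNorm d u p p' lam) :
    morreyNorm d u p (fun k => f (fun n => if n = k then 1 else 0)) ≤ C := by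
  classical
  have hp0 : (0:ℝ) < p := lt_trans one_pos hp1
  set μ : (Fin d → ℤ) → ℂ := fun k => f (fun n => if n = k then 1 else 0) with hμ
  rw [morreyNorm]
  refine iSup_le fun j => iSup_le fun m => ?_
  rw [tsum_cube (g := fun k => (‖μ k‖₊ : ℝ≥0∞) ^ p)]
  set Sfin := (cube_finite d j m).toFinset with hSfin
  have hmem : ∀ k, k ∈ Sfin ↔ inDyadic d j m k := by
    intro k; rw [hSfin, Set.Finite.mem_toFinset]; rfl
  set A := ∑ k ∈ Sfin, (‖μ k‖₊ : ℝ≥0∞) ^ p with hA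
  by_cases hA0 : A = 0
  · rw [hA0, ENNReal.zero_rpow_of_pos (by positivity), mul_zero]
    exact zero_le
  have hAtop : A ≠ ⊤ := by
    rw [hA]
    refine (ENNReal.sum_lt_top.2 fun k _ => ?_).ne
    exact ENNReal.rpow_lt_top_of_nonneg hp0.le ENNReal.coe_ne_top
  set lamF : (Fin d → ℤ) → ℂ := fun k =>
    if inDyadic d j m k then (starRingEnd ℂ) (μ k) * ((‖μ k‖ ^ (p-2) : ℝ) : ℂ) else 0 with hlamF
  -- (i) norm of lamF
  have hnormF : ∀ k, inDyadic d j m k → ‖lamF k‖ = ‖μ k‖ ^ (p-1) := by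
    intro k hk
    rw [hlamF]
    simp only [if_pos hk]
    by_cases hz : μ k = 0
    · rw [hz]
      simp [Real.zero_rpow (by linarith : p - 1 ≠ 0)]
    · have hpos : (0:ℝ) < ‖μ k‖ := norm_pos_iff.2 hz
      rw [norm_mul, RCLike.norm_conj, Complex.norm_real, Real.norm_eq_abs,
        abs_of_nonneg (Real.rpow_nonneg (norm_nonneg _) _),
        show p - 1 = 1 + (p - 2) by ring, Real.rpow_add hpos, Real.rpow_one]
  -- (ii) product
  have hmulF : ∀ k, inDyadic d j m k → lamF k * μ k = ((‖μ k‖ ^ p : ℝ) : ℂ) := by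
    intro k hk
    rw [hlamF]
    simp only [if_pos hk]
    by_cases hz : μ k = 0
    · rw [hz]
      simp [Real.zero_rpow (ne_of_gt hp0)]
    · have hpos : (0:ℝ) < ‖μ k‖ := norm_pos_iff.2 hz
      have : (starRingEnd ℂ) (μ k) * ((‖μ k‖ ^ (p-2) : ℝ) : ℂ) * μ k
          = (μ k * (starRingEnd ℂ) (μ k)) * ((‖μ k‖ ^ (p-2) : ℝ) : ℂ) := by ring
      rw [this, Complex.mul_conj]
      rw [← Complex.ofReal_mul]
      congr 1
      rw [Complex.normSq_eq_norm_sq,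
        show (‖μ k‖ ^ 2 : ℝ) = ‖μ k‖ ^ (2:ℝ) by rw [← Real.rpow_natCast]; norm_num,
        ← Real.rpow_add hpos]
      norm_num
  have hsuppF : ∀ k, ¬ inDyadic d j m k → lamF k = 0 := by
    intro k hk; rw [hlamF]; simp [if_neg hk]
  -- (iv) representation as finite combination
  have hrepr : lamF = fun n => ∑ k ∈ Sfin, lamF k * (if n = k then 1 else 0) := by
    funext n
    rw [Finset.sum_congr rfl (fun k _ => mul_ite (n = k) (lamF k) 1 0)]
    simp only [mul_one, mul_zero]
    rw [Finset.sum_ite_eq Sfin n lamF]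
    by_cases hn : n ∈ Sfin
    · simp [hn]
    · simp only [if_neg hn]
      exact hsuppF n (fun h => hn ((hmem n).2 h))
  -- (v) value of f at lamF
  have hfval : f lamF = ((∑ k ∈ Sfin, ‖μ k‖ ^ p : ℝ) : ℂ) := by
    conv_lhs => rw [hrepr]
    rw [f_finsum hp'0 f hadd hsmul Sfin lamF]
    rw [Finset.sum_congr rfl (fun k hk => hmulF k ((hmem k).1 hk))]
    push_cast
    rfl
  -- (vi) norm of f lamF equals A
  have hnormf : (‖f lamF‖₊ : ℝ≥0∞) = A := by
    rw [hfval]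
    have hr : (0:ℝ) ≤ ∑ k ∈ Sfin, ‖μ k‖ ^ p :=
      Finset.sum_nonneg fun k _ => Real.rpow_nonneg (norm_nonneg _) _
    rw [Complex.nnnorm_real, ← enorm_eq_nnnorm, Real.enorm_eq_ofReal hr]
    rw [ENNReal.ofReal_sum_of_nonneg (fun k _ => Real.rpow_nonneg (norm_nonneg _) _)]
    rw [hA]
    apply Finset.sum_congr rfl
    intro k _
    rw [← ENNReal.ofReal_rpow_of_nonneg (norm_nonneg _) hp0.le, ofReal_norm, enorm_eq_nnnorm]
  -- (vii) XupNorm bound for lamF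
  set B := ((2 : ℝ≥0∞) ^ (j * d)) ^ (1/p - 1/u) with hB
  have hXj : XjNorm d u p p' j lamF = B * A ^ (1/p') := by
    rw [XjNorm, ← hB]
    congr 1
    rw [tsum_eq_single m]
    · rw [tsum_cube (g := fun k => (‖lamF k‖₊ : ℝ≥0∞) ^ p')]
      congr 1
      rw [hA]
      apply Finset.sum_congr rfl
      intro k hk
      have hk' := (hmem k).1 hk
      have h1 : ‖lamF k‖₊ = ‖μ k‖₊ ^ (p-1) := by
        apply NNReal.coe_injective
        rw [coe_nnnorm, NNReal.coe_rpow, coe_nnnorm]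
        exact hnormF k hk'
      rw [h1, ENNReal.coe_rpow_of_nonneg _ (by linarith : (0:ℝ) ≤ p - 1),
        ← ENNReal.rpow_mul, hppr]
    · intro m' hm'
      have hz : ∀ k : {k : Fin d → ℤ // inDyadic d j m' k}, lamF k.1 = 0 := by
        intro k
        apply hsuppF
        intro hk
        exact hm' (inDyadic_disjoint k.2 hk)
      have hzz : ∀ k : {k : Fin d → ℤ // inDyadic d j m' k},
          (‖lamF k.1‖₊ : ℝ≥0∞) ^ p' = 0 := by
        intro k
        rw [hz k]
        simp [ENNReal.zero_rpow_of_pos hp'0]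
      rw [tsum_congr hzz, tsum_zero, ENNReal.zero_rpow_of_pos (by positivity)]
  have hXfin : XupNorm d u p p' lamF ≠ ⊤ := by
    refine ne_top_of_le_ne_top ?_ (XupNorm_le_XjNorm hp'0 j lamF)
    rw [hXj]
    exact ENNReal.mul_ne_top (bfac_ne_top j _) (ENNReal.rpow_ne_top_of_nonneg (by positivity) hAtop)
  -- (viii) conclude
  have hmain : A ≤ C * (B * A ^ (1/p')) := by
    have h := le_trans (hbound lamF hXfin)
      (mul_le_mul_right (le_trans (XupNorm_le_XjNorm hp'0 j lamF) hXj.le) C)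
    rw [hnormf] at h
    exact h
  have hsplit : A = A ^ (1/p) * A ^ (1/p') := by
    rw [← ENNReal.rpow_add _ _ hA0 hAtop, hconj, ENNReal.rpow_one]
  have hcancel : A ^ (1/p) ≤ C * B := by
    have hc0 : A ^ (1/p') ≠ 0 := by
      simp [ENNReal.rpow_eq_zero_iff, hA0, hAtop]
    have hctop : A ^ (1/p') ≠ ⊤ := ENNReal.rpow_ne_top_of_nonneg (by positivity) hAtop
    rw [← ENNReal.mul_le_mul_iff_left hc0 hctop, ← hsplit]
    calc A ≤ C * (B * A ^ (1/p')) := hmain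
      _ = C * B * A ^ (1/p') := by ring
  calc ((2 : ℝ≥0∞) ^ (j * d)) ^ (1/u - 1/p) * A ^ (1/p)
      ≤ ((2 : ℝ≥0∞) ^ (j * d)) ^ (1/u - 1/p) * (C * B) := mul_le_mul_right hcancel _
    _ = C * (((2 : ℝ≥0∞) ^ (j * d)) ^ (1/p - 1/u) *
          ((2 : ℝ≥0∞) ^ (j * d)) ^ (-(1/p - 1/u))) := by
        rw [hB, show (1/u - 1/p : ℝ) = -(1/p - 1/u) by ring]; ring
    _ = C := by rw [bfac_mul_bfac, mul_one]

end PartB2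

theorem Xup_predual_of_morrey (d : ℕ) (u p p' : ℝ)
    (hp : 1 ≤ p) (hpu : p < u) (hp'pos : 0 < p') (hp' : 1 / p + 1 / p' = 1) :
    (∀ mu lam : (Fin d → ℤ) → ℂ, morreyNorm d u p mu ≠ ⊤ → XupNorm d u p p' lam ≠ ⊤ →
        Summable (fun k => lam k * mu k) ∧
        (‖∑' k, lam k * mu k‖₊ : ℝ≥0∞) ≤ morreyNorm d u p mu * XupNorm d u p p' lam) ∧
    (∀ f : ((Fin d → ℤ) → ℂ) → ℂ, ∀ C : ℝ≥0∞,
        (∀ lam mu : (Fin d → ℤ) → ℂ, XupNorm d u p p' lam ≠ ⊤ → XupNorm d u p p' mu ≠ ⊤ →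
          f (lam + mu) = f lam + f mu) →
        (∀ (c : ℂ) (lam : (Fin d → ℤ) → ℂ), XupNorm d u p p' lam ≠ ⊤ →
          f (c • lam) = c * f lam) →
        (∀ lam : (Fin d → ℤ) → ℂ, XupNorm d u p p' lam ≠ ⊤ →
          (‖f lam‖₊ : ℝ≥0∞) ≤ C * XupNorm d u p p' lam) →
        morreyNorm d u p (fun k => f (fun n => if n = k then 1 else 0)) ≤ C) := by
  have hp0 : (0:ℝ) < p := lt_of_lt_of_le one_pos hp
  have h1p : 1 < p := by
    have h1 : 1/p < 1 := by
      have : (0:ℝ) < 1/p' := by positivity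
      linarith
    exact (div_lt_one hp0).mp h1
  have hpq : p.HolderConjugate p' := Real.holderConjugate_iff.2 ⟨h1p, by rw [← one_div, ← one_div]; exact hp'⟩
  have hppr : (p-1)*p' = p := by
    have hp'0 : p' ≠ 0 := ne_of_gt hp'pos
    have hpne : p ≠ 0 := ne_of_gt hp0
    field_simp at hp'
    nlinarith [hp']
  constructor
  · intro mu lam hmu hlam
    exact partA hpq mu lam hmu hlam
  · intro f C hadd hsmul hbound
    exact partB h1p hp'pos hp' hppr f C hadd hsmul hbound
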